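/- Let φ, κ, β_i, Γ_i be smooth fields on ℝ × ℝ³ satisfying the linearized BSSN evolution equations (E1) and (E6). Then at every point of ℝ × ℝ³, ∂_t(∂_l Γ_l − 8Δφ) = 0; that is, the Hamiltonian constraint quantity ∂_l Γ_l − 8Δφ is independent of time. -/

import Mathlib

noncomputable section

/-- Spacetime ℝ × ℝ³. -/
abbrev Spc : Type := ℝ × (Fin 3 → ℝ)

/-- Time derivative ∂_t. -/
noncomputable def pt (f : Spc → ℝ) : Spc → ℝ :=
  fun p => deriv (fun s => f (s, p.2)) p.1

/-- Spatial partial derivative ∂_i. -/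
noncomputable def ps (i : Fin 3) (f : Spc → ℝ) : Spc → ℝ :=
  fun p => deriv (fun s => f (p.1, Function.update p.2 i s)) (p.2 i)

/-- Spatial Laplacian Δ = Σ_i ∂_i ∂_i. -/
noncomputable def lap (f : Spc → ℝ) : Spc → ℝ :=
  fun p => ∑ i : Fin 3, ps i (ps i f) p

/-- Kronecker delta δ_ij. -/
noncomputable def kron (i j : Fin 3) : ℝ := if i = j then 1 else 0

/-! ### Auxiliary machinery: directional derivatives -/

noncomputable def Dv (v : Spc) (f : Spc → ℝ) : Spc → ℝ := fun p => fderiv ℝ f p v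

abbrev etv : Spc := (1, 0)
abbrev esv (i : Fin 3) : Spc := (0, Pi.single i 1)

lemma sm_diff {F : Type*} [NormedAddCommGroup F] [NormedSpace ℝ F] {f : Spc → F}
    (hf : ContDiff ℝ (⊤ : ℕ∞) f) : Differentiable ℝ f :=
  hf.differentiable (by simp)

lemma sm_fderiv {f : Spc → ℝ} (hf : ContDiff ℝ (⊤ : ℕ∞) f) :
    ContDiff ℝ (⊤ : ℕ∞) (fderiv ℝ f) :=
  hf.fderiv_right (m := ((⊤:ℕ∞) : WithTop ℕ∞)) (by exact_mod_cast (le_top : (⊤+1:ℕ∞) ≤ ⊤))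

lemma pt_eq {f : Spc → ℝ} (hf : ContDiff ℝ (⊤ : ℕ∞) f) : pt f = Dv etv f := by
  funext p
  have hc : HasDerivAt (fun s : ℝ => ((s, p.2) : Spc)) etv p.1 :=
    (hasDerivAt_id p.1).prodMk (hasDerivAt_const p.1 p.2)
  have hfd : HasFDerivAt f (fderiv ℝ f p) p := (sm_diff hf p).hasFDerivAt
  have := (hfd.comp_hasDerivAt p.1 hc).deriv
  simpa [pt, Dv, Function.comp_def] using this

lemma ps_eq {f : Spc → ℝ} (hf : ContDiff ℝ (⊤ : ℕ∞) f) (i : Fin 3) :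
    ps i f = Dv (esv i) f := by
  funext p
  have hc : HasDerivAt (fun s : ℝ => ((p.1, Function.update p.2 i s) : Spc)) (esv i) (p.2 i) :=
    (hasDerivAt_const (p.2 i) p.1).prodMk (hasDerivAt_update p.2 i (p.2 i))
  have hcp : ((p.1, Function.update p.2 i (p.2 i)) : Spc) = p := by
    simp [Function.update_eq_self]
  have hfd : HasFDerivAt f (fderiv ℝ f p) p := (sm_diff hf p).hasFDerivAt
  rw [← hcp] at hfd
  have := (hfd.comp_hasDerivAt (p.2 i) hc).deriv
  simpa [ps, Dv, Function.comp_def] using this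

lemma Dv_smooth {f : Spc → ℝ} (hf : ContDiff ℝ (⊤ : ℕ∞) f) (v : Spc) :
    ContDiff ℝ (⊤ : ℕ∞) (Dv v f) :=
  (sm_fderiv hf).clm_apply contDiff_const

lemma Dv_comm {f : Spc → ℝ} (hf : ContDiff ℝ (⊤ : ℕ∞) f) (v w : Spc) :
    Dv v (Dv w f) = Dv w (Dv v f) := by
  funext p
  have hd : ∀ y, HasFDerivAt f (fderiv ℝ f y) y := fun y => (sm_diff hf y).hasFDerivAt
  have h2 : HasFDerivAt (fderiv ℝ f) (fderiv ℝ (fderiv ℝ f) p) p :=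
    (sm_diff (sm_fderiv hf) p).hasFDerivAt
  have key : ∀ a b : Spc, Dv a (Dv b f) p = fderiv ℝ (fderiv ℝ f) p a b := by
    intro a b
    have h3 : HasFDerivAt (fun q => fderiv ℝ f q b)
        ((ContinuousLinearMap.apply ℝ ℝ b).comp (fderiv ℝ (fderiv ℝ f) p)) p :=
      (ContinuousLinearMap.apply ℝ ℝ b).hasFDerivAt.comp p h2
    have h4 := h3.fderiv
    calc Dv a (Dv b f) p = fderiv ℝ (fun q => fderiv ℝ f q b) p a := rfl
      _ = fderiv ℝ (fderiv ℝ f) p a b := by rw [h4]; rfl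
  rw [key v w, key w v]
  exact second_derivative_symmetric hd h2 v w

lemma Dv_add {f g : Spc → ℝ} (hf : ContDiff ℝ (⊤ : ℕ∞) f) (hg : ContDiff ℝ (⊤ : ℕ∞) g) (v : Spc) :
    Dv v (fun p => f p + g p) = fun p => Dv v f p + Dv v g p := by
  funext p
  simp [Dv, fderiv_fun_add (sm_diff hf p) (sm_diff hg p)]

lemma Dv_sub {f g : Spc → ℝ} (hf : ContDiff ℝ (⊤ : ℕ∞) f) (hg : ContDiff ℝ (⊤ : ℕ∞) g) (v : Spc) :
    Dv v (fun p => f p - g p) = fun p => Dv v f p - Dv v g p := by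
  funext p
  simp [Dv, fderiv_fun_sub (sm_diff hf p) (sm_diff hg p)]

lemma Dv_const_mul {f : Spc → ℝ} (hf : ContDiff ℝ (⊤ : ℕ∞) f) (c : ℝ) (v : Spc) :
    Dv v (fun p => c * f p) = fun p => c * Dv v f p := by
  funext p
  simp [Dv, fderiv_const_mul (sm_diff hf p) c]

lemma Dv_sum {ι : Type*} [Fintype ι] {f : ι → Spc → ℝ}
    (hf : ∀ i, ContDiff ℝ (⊤ : ℕ∞) (f i)) (v : Spc) :
    Dv v (fun p => ∑ i, f i p) = fun p => ∑ i, Dv v (f i) p := by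
  funext p
  simp [Dv, fderiv_fun_sum (fun i _ => sm_diff (hf i) p)]

/-- If (E1) and (E6) hold, then `∂_t(∂_l Γ_l − 8Δφ) = 0`, i.e. the Hamiltonian
constraint quantity `∂_l Γ_l − 8Δφ` is independent of time. -/
theorem hamiltonian_constraint_evolution_Gamma
    (φ κ : Spc → ℝ) (β Γ : Fin 3 → Spc → ℝ)
    (hφ : ContDiff ℝ (⊤ : ℕ∞) φ) (hκ : ContDiff ℝ (⊤ : ℕ∞) κ)
    (hβ : ∀ i, ContDiff ℝ (⊤ : ℕ∞) (β i)) (hΓ : ∀ i, ContDiff ℝ (⊤ : ℕ∞) (Γ i))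
    (E1 : ∀ p, pt φ p = -(1/6) * κ p + (1/6) * ∑ l, ps l (β l) p)
    (E6 : ∀ i p, pt (Γ i) p =
      -(4/3) * ps i κ p + (1/3) * ps i (fun q => ∑ l, ps l (β l) q) p + lap (β i) p)
    (H : Spc → ℝ)
    (hH : H = fun p => (∑ l, ps l (Γ l) p) - 8 * lap φ p) :
    (∀ p, pt H p = 0) ∧
      (∀ t₁ t₂ : ℝ, ∀ x : Fin 3 → ℝ, H (t₁, x) = H (t₂, x)) := by
  -- the divergence of β in directional-derivative form
  have hbsm : ContDiff ℝ (⊤ : ℕ∞) (fun q => ∑ l, Dv (esv l) (β l) q) :=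
    ContDiff.sum (fun l _ => Dv_smooth (hβ l) _)
  have hdivp : ∀ q, (∑ l, ps l (β l) q) = ∑ l, Dv (esv l) (β l) q := by
    intro q
    exact Finset.sum_congr rfl (fun l _ => by rw [ps_eq (hβ l)])
  have hdivf : (fun q => ∑ l, ps l (β l) q) = fun q => ∑ l, Dv (esv l) (β l) q :=
    funext hdivp
  have hlap : ∀ (f : Spc → ℝ), ContDiff ℝ (⊤ : ℕ∞) f → ∀ p,
      lap f p = ∑ j, Dv (esv j) (Dv (esv j) f) p := by
    intro f hf p
    exact Finset.sum_congr rfl (fun j _ => by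
      rw [ps_eq hf j, ps_eq (Dv_smooth hf (esv j)) j])
  -- E1 in D-form
  have E1' : Dv etv φ = fun p => -(1/6) * κ p + (1/6) * (∑ l, Dv (esv l) (β l) p) := by
    rw [← pt_eq hφ]
    funext p
    rw [E1 p, hdivp p]
  -- E6 in D-form
  have E6' : ∀ l, Dv etv (Γ l) = fun p =>
      -(4/3) * Dv (esv l) κ p + (1/3) * Dv (esv l) (fun q => ∑ m, Dv (esv m) (β m) q) p
        + ∑ j, Dv (esv j) (Dv (esv j) (β l)) p := by
    intro l
    rw [← pt_eq (hΓ l)]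
    funext p
    rw [E6 l p, ps_eq hκ, hlap (β l) (hβ l) p, hdivf, ps_eq hbsm]
  -- H in D-form
  have hHD : H = fun p => (∑ l, Dv (esv l) (Γ l) p)
      - 8 * ∑ i, Dv (esv i) (Dv (esv i) φ) p := by
    rw [hH]
    funext p
    rw [hlap φ hφ p]
    congr 1
    exact Finset.sum_congr rfl (fun l _ => by rw [ps_eq (hΓ l)])
  have hAsm : ContDiff ℝ (⊤ : ℕ∞) (fun p => ∑ l, Dv (esv l) (Γ l) p) :=
    ContDiff.sum (fun l _ => Dv_smooth (hΓ l) _)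
  have hBsm : ContDiff ℝ (⊤ : ℕ∞) (fun p => ∑ i, Dv (esv i) (Dv (esv i) φ) p) :=
    ContDiff.sum (fun i _ => Dv_smooth (Dv_smooth hφ _) _)
  have hHsm : ContDiff ℝ (⊤ : ℕ∞) H := by
    rw [hHD]; exact hAsm.sub (contDiff_const.mul hBsm)
  -- the time derivative of each summand of the first sum
  have eA : ∀ l, Dv etv (Dv (esv l) (Γ l)) = fun p =>
      -(4/3) * Dv (esv l) (Dv (esv l) κ) p
      + (1/3) * Dv (esv l) (Dv (esv l) (fun q => ∑ m, Dv (esv m) (β m) q)) p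
      + ∑ j, Dv (esv l) (Dv (esv j) (Dv (esv j) (β l))) p := by
    intro l
    rw [Dv_comm (hΓ l) etv (esv l), E6' l]
    have h1 : ContDiff ℝ (⊤ : ℕ∞) (fun p => -(4/3) * Dv (esv l) κ p) :=
      contDiff_const.mul (Dv_smooth hκ _)
    have h2 : ContDiff ℝ (⊤ : ℕ∞)
        (fun p => (1/3) * Dv (esv l) (fun q => ∑ m, Dv (esv m) (β m) q) p) :=
      contDiff_const.mul (Dv_smooth hbsm _)
    have h3 : ContDiff ℝ (⊤ : ℕ∞) (fun p => ∑ j, Dv (esv j) (Dv (esv j) (β l)) p) :=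
      ContDiff.sum (fun j _ => Dv_smooth (Dv_smooth (hβ l) _) _)
    rw [Dv_add (h1.add h2) h3 (esv l), Dv_add h1 h2 (esv l),
      Dv_const_mul (Dv_smooth hκ (esv l)) (-(4/3)) (esv l),
      Dv_const_mul (Dv_smooth hbsm (esv l)) (1/3) (esv l),
      Dv_sum (fun j => Dv_smooth (Dv_smooth (hβ l) _) _) (esv l)]
  -- the time derivative of each summand of the second sum
  have eB : ∀ i, Dv etv (Dv (esv i) (Dv (esv i) φ)) = fun p =>
      -(1/6) * Dv (esv i) (Dv (esv i) κ) p
      + (1/6) * Dv (esv i) (Dv (esv i) (fun q => ∑ m, Dv (esv m) (β m) q)) p := by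
    intro i
    rw [Dv_comm (Dv_smooth hφ (esv i)) etv (esv i), Dv_comm hφ etv (esv i), E1',
      Dv_add (contDiff_const.mul hκ) (contDiff_const.mul hbsm) (esv i),
      Dv_const_mul hκ (-(1/6)) (esv i), Dv_const_mul hbsm (1/6) (esv i),
      Dv_add (contDiff_const.mul (Dv_smooth hκ _)) (contDiff_const.mul (Dv_smooth hbsm _)) (esv i),
      Dv_const_mul (Dv_smooth hκ _) (-(1/6)) (esv i),
      Dv_const_mul (Dv_smooth hbsm _) (1/6) (esv i)]
  -- expanding the second derivative of the divergence
  have hbD : ∀ l, Dv (esv l) (Dv (esv l) (fun q => ∑ m, Dv (esv m) (β m) q))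
      = fun q => ∑ m, Dv (esv l) (Dv (esv l) (Dv (esv m) (β m))) q := by
    intro l
    rw [Dv_sum (fun m => Dv_smooth (hβ m) _) (esv l),
      Dv_sum (fun m => Dv_smooth (Dv_smooth (hβ m) _) _) (esv l)]
  -- commuting the triple spatial derivatives
  have hswap : ∀ l j, Dv (esv l) (Dv (esv j) (Dv (esv j) (β l)))
      = Dv (esv j) (Dv (esv j) (Dv (esv l) (β l))) := by
    intro l j
    rw [Dv_comm (Dv_smooth (hβ l) (esv j)) (esv l) (esv j),
      Dv_comm (hβ l) (esv l) (esv j)]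
  have hZY : ∀ p, (∑ l, ∑ j, Dv (esv l) (Dv (esv j) (Dv (esv j) (β l))) p)
      = ∑ l, Dv (esv l) (Dv (esv l) (fun q => ∑ m, Dv (esv m) (β m) q)) p := by
    intro p
    have h1 : (∑ l, Dv (esv l) (Dv (esv l) (fun q => ∑ m, Dv (esv m) (β m) q)) p)
        = ∑ l, ∑ m, Dv (esv l) (Dv (esv l) (Dv (esv m) (β m))) p :=
      Finset.sum_congr rfl (fun l _ => congrFun (hbD l) p)
    have h2 : (∑ l, ∑ j, Dv (esv l) (Dv (esv j) (Dv (esv j) (β l))) p)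
        = ∑ l, ∑ j, Dv (esv j) (Dv (esv j) (Dv (esv l) (β l))) p :=
      Finset.sum_congr rfl (fun l _ => Finset.sum_congr rfl (fun j _ => by rw [hswap l j]))
    rw [h1, h2, Finset.sum_comm]
  -- Part 1: pt H vanishes everywhere
  have part1 : ∀ p, pt H p = 0 := by
    intro p
    rw [pt_eq hHsm, hHD,
      Dv_sub hAsm (contDiff_const.mul hBsm) etv]
    simp only [Dv_const_mul hBsm 8 etv,
      Dv_sum (fun l => Dv_smooth (hΓ l) (esv l)) etv,
      Dv_sum (fun i => Dv_smooth (Dv_smooth hφ (esv i)) (esv i)) etv]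
    have hA' : (∑ l, Dv etv (Dv (esv l) (Γ l)) p)
        = ∑ l, (-(4/3) * Dv (esv l) (Dv (esv l) κ) p
          + (1/3) * Dv (esv l) (Dv (esv l) (fun q => ∑ m, Dv (esv m) (β m) q)) p
          + ∑ j, Dv (esv l) (Dv (esv j) (Dv (esv j) (β l))) p) :=
      Finset.sum_congr rfl (fun l _ => congrFun (eA l) p)
    have hB' : (∑ i, Dv etv (Dv (esv i) (Dv (esv i) φ)) p)
        = ∑ i, (-(1/6) * Dv (esv i) (Dv (esv i) κ) p
          + (1/6) * Dv (esv i) (Dv (esv i) (fun q => ∑ m, Dv (esv m) (β m) q)) p) :=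
      Finset.sum_congr rfl (fun i _ => congrFun (eB i) p)
    rw [hA', hB']
    simp only [Finset.sum_add_distrib, ← Finset.mul_sum]
    rw [hZY p]
    ring
  refine ⟨part1, fun t₁ t₂ x => ?_⟩
  have hg : Differentiable ℝ (fun t : ℝ => H (t, x)) :=
    (sm_diff hHsm).comp (differentiable_id.prodMk (differentiable_const x))
  have hd0 : ∀ t, deriv (fun t : ℝ => H (t, x)) t = 0 := fun t => part1 (t, x)
  exact is_const_of_deriv_eq_zero hg hd0 t₁ t₂
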